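/- Let m be a symmetric positive definite l×l real matrix, x, y ∈ ℝ^l nonzero vectors, U = ⟨x, y⟩ ≠ 0, and define p = −m + (7/(3U)) y yᵀ. Suppose moreover that 3 p x = 4 y. Then p is invertible and p⁻¹ = −m⁻¹ + (7/(4U)) x xᵀ. -/

import Mathlib

open Matrix

theorem stmt_2 {l : ℕ} (m : Matrix (Fin l) (Fin l) ℝ) (hm : m.IsSymm)
    (hmpos : m.PosDef) (x y : Fin l → ℝ) (hx : x ≠ 0) (hy : y ≠ 0)
    (U : ℝ) (hU : U = x ⬝ᵥ y) (hU0 : U ≠ 0)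
    (p : Matrix (Fin l) (Fin l) ℝ)
    (hp : p = -m + (7 / (3 * U)) • vecMulVec y y)
    (hpx : (3 : ℝ) • p.mulVec x = (4 : ℝ) • y) :
    IsUnit p ∧ p⁻¹ = -m⁻¹ + (7 / (4 * U)) • vecMulVec x x := by
  have hdet : IsUnit m.det := isUnit_iff_ne_zero.mpr hmpos.det_pos.ne'
  have hmm : m * m⁻¹ = 1 := Matrix.mul_nonsing_inv m hdet
  have hmm' : m⁻¹ * m = 1 := Matrix.nonsing_inv_mul m hdet
  -- vecMulVec y y *ᵥ x = U • y
  have hYx : vecMulVec y y *ᵥ x = U • y := by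
    funext i
    simp only [Matrix.mulVec, vecMulVec_apply, dotProduct, Pi.smul_apply, smul_eq_mul, hU]
    rw [Finset.sum_mul]
    apply Finset.sum_congr rfl
    intro k _
    ring
  -- derive m *ᵥ x = y from hpx
  have hmx : m *ᵥ x = y := by
    rw [hp, Matrix.add_mulVec, Matrix.neg_mulVec, Matrix.smul_mulVec, hYx,
      smul_smul] at hpx
    have hc : 7 / (3 * U) * U = 7 / 3 := by field_simp
    rw [hc] at hpx
    funext i
    have := congrFun hpx i
    simp only [Pi.smul_apply, Pi.add_apply, Pi.neg_apply, smul_eq_mul] at this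
    linarith
  have hmiy : m⁻¹ *ᵥ y = x := by
    rw [← hmx, Matrix.mulVec_mulVec, hmm', Matrix.one_mulVec]
  have hmisymm : m⁻¹ᵀ = m⁻¹ := by
    rw [Matrix.transpose_nonsing_inv, hm.eq]
  have hymi : y ᵥ* m⁻¹ = x := by
    rw [← hmisymm, Matrix.vecMul_transpose, hmiy]
  -- three product identities
  have hMX : m * vecMulVec x x = vecMulVec y x := by
    rw [← hmx]
    ext i j
    simp only [Matrix.mul_apply, vecMulVec_apply, Matrix.mulVec, dotProduct]
    rw [Finset.sum_mul]
    apply Finset.sum_congr rfl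
    intro k _
    ring
  have hYMi : vecMulVec y y * m⁻¹ = vecMulVec y x := by
    rw [← hymi]
    ext i j
    simp only [Matrix.mul_apply, vecMulVec_apply, Matrix.vecMul, dotProduct]
    rw [Finset.mul_sum]
    apply Finset.sum_congr rfl
    intro k _
    ring
  have hYX : vecMulVec y y * vecMulVec x x = U • vecMulVec y x := by
    ext i j
    simp only [Matrix.mul_apply, vecMulVec_apply, Matrix.smul_apply, smul_eq_mul, hU,
      dotProduct]
    rw [Finset.sum_mul]
    apply Finset.sum_congr rfl
    intro k _
    ring
  set V := vecMulVec y x with hV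
  have hpq : p * (-m⁻¹ + (7 / (4 * U)) • vecMulVec x x) = 1 := by
    rw [hp, add_mul, mul_add, mul_add, neg_mul, neg_mul, mul_neg, mul_neg, neg_neg,
      Matrix.mul_smul, Matrix.smul_mul, Matrix.smul_mul, Matrix.mul_smul,
      hMX, hYMi, hYX, hmm, smul_smul, smul_smul]
    have hcoef : 7 / (3 * U) * (7 / (4 * U)) * U = 7 / (4 * U) + 7 / (3 * U) := by
      field_simp
      ring
    rw [hcoef, add_smul]
    abel
  exact ⟨(Matrix.isUnit_iff_isUnit_det p).mpr (Matrix.isUnit_det_of_right_inverse hpq), Matrix.inv_eq_right_inv hpq⟩
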